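/- Let Ω be a finite product probability space and let B, C be decreasing events and D an event measurable with respect to a sub-collection F of the coordinates, such that conditionally on F the measure is still a product measure and B, C are decreasing in the remaining coordinates. Then P(D ∩ B ∩ C) ≥ E[1_D · P(B | F) · P(C | F)]. -/

import Mathlib

open MeasureTheory

open OrderDual in
/-- FKG inequality for two antitone functions. -/
private lemma fkg_antitone {α : Type*} [DistribLattice α] [Fintype α] {w f g : α → ℝ}
    (hw : ∀ a, 0 ≤ w a) (hf0 : ∀ a, 0 ≤ f a) (hg0 : ∀ a, 0 ≤ g a)
    (hf : Antitone f) (hg : Antitone g)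
    (hw2 : ∀ a b, w a * w b = w (a ⊓ b) * w (a ⊔ b)) :
    (∑ a, w a * f a) * ∑ a, w a * g a ≤ (∑ a, w a) * ∑ a, w a * (f a * g a) := by
  have h := fkg (α := αᵒᵈ) (β := ℝ) (μ := fun a => w (ofDual a))
    (f := fun a => f (ofDual a)) (g := fun a => g (ofDual a))
    (fun a => hw _) (fun a => hf0 _) (fun a => hg0 _)
    (fun a b hab => hf hab) (fun a b hab => hg hab)
    (fun a b => le_of_eq (((hw2 (ofDual a) (ofDual b)).trans (mul_comm _ _))))
  calc (∑ a, w a * f a) * ∑ a, w a * g a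
      = (∑ a : αᵒᵈ, w (ofDual a) * f (ofDual a)) * ∑ a : αᵒᵈ, w (ofDual a) * g (ofDual a) := by
        rw [Equiv.sum_comp (ofDual (α := α)) (fun x => w x * f x),
          Equiv.sum_comp (ofDual (α := α)) (fun x => w x * g x)]
    _ ≤ (∑ a : αᵒᵈ, w (ofDual a)) * ∑ a : αᵒᵈ, w (ofDual a) * (f (ofDual a) * g (ofDual a)) := h
    _ = (∑ a, w a) * ∑ a, w a * (f a * g a) := by
        rw [Equiv.sum_comp (ofDual (α := α)) w,
          Equiv.sum_comp (ofDual (α := α)) (fun x => w x * (f x * g x))]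

/-- Conditional Harris–FKG: on a finite product probability space, for decreasing events
`B`, `C` and an event `D` measurable with respect to the coordinates in `F`,
`P(D ∩ B ∩ C) ≥ E[1_D · P(B|F) · P(C|F)]`. -/
theorem stmt_13 {ι : Type*} [Fintype ι] (μ : ι → Measure Bool)
    [∀ i, IsProbabilityMeasure (μ i)] (F : Set ι)
    (mF : MeasurableSpace (ι → Bool))
    (hmF : mF = MeasurableSpace.comap
      (fun (ω : ι → Bool) (i : F) => ω (i : ι))
      (inferInstance : MeasurableSpace (F → Bool)))
    (B C D : Set (ι → Bool)) (hB : MeasurableSet B) (hC : MeasurableSet C)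
    (hD : MeasurableSet[mF] D)
    (hBdec : ∀ ω ω' : ι → Bool, ω ≤ ω' → ω' ∈ B → ω ∈ B)
    (hCdec : ∀ ω ω' : ι → Bool, ω ≤ ω' → ω' ∈ C → ω ∈ C) :
    ∫ ω, Set.indicator D (fun _ => (1 : ℝ)) ω *
        MeasureTheory.condExp mF (Measure.pi μ) (Set.indicator B (fun _ => (1 : ℝ))) ω *
        MeasureTheory.condExp mF (Measure.pi μ) (Set.indicator C (fun _ => (1 : ℝ))) ω
        ∂(Measure.pi μ)
      ≤ ((Measure.pi μ) (D ∩ B ∩ C)).toReal := by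
  classical
  letI m0 : MeasurableSpace (ι → Bool) := MeasurableSpace.pi
  set π := Measure.pi μ with hπdef
  set p : ι → Prop := fun i => i ∈ F with hp
  set q : (ι → Bool) → (F → Bool) := fun ω (i : F) => ω (i : ι) with hqdef
  haveI hprob : IsProbabilityMeasure π := by rw [hπdef]; infer_instance
  have hmsPi : ∀ s : Set (ι → Bool), MeasurableSet[MeasurableSpace.pi] s :=
    fun _ => MeasurableSet.of_discrete
  have hintg : ∀ φ : (ι → Bool) → ℝ, Integrable φ π := fun _ => Integrable.of_finite
  have hqmeas : Measurable[MeasurableSpace.pi] q :=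
    measurable_pi_lambda _ fun i => measurable_pi_apply _
  have hm : mF ≤ (MeasurableSpace.pi : MeasurableSpace (ι → Bool)) :=
    hmF.le.trans hqmeas.comap_le
  haveI hsf : SigmaFinite (π.trim hm) := inferInstance
  -- the splitting equivalence
  set e : (ι → Bool) ≃ ((∀ _ : {x // p x}, Bool) × ∀ _ : {x // ¬ p x}, Bool) :=
    Equiv.piEquivPiSubtypeProd p (fun _ => Bool) with he
  -- weights
  set w : (ι → Bool) → ℝ := fun ω => ∏ i, (μ i {ω i}).toReal with hwdef
  set u : (∀ _ : {x // p x}, Bool) → ℝ := fun a => ∏ j : {x // p x}, (μ (j : ι) {a j}).toReal with hudef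
  set v : (∀ _ : {x // ¬ p x}, Bool) → ℝ := fun b => ∏ j : {x // ¬ p x}, (μ (j : ι) {b j}).toReal with hvdef
  set ind : Set (ι → Bool) → (ι → Bool) → ℝ := fun E => E.indicator (fun _ => (1 : ℝ))
    with hinddef
  have hind0 : ∀ E x, 0 ≤ ind E x := fun E x => Set.indicator_nonneg (fun _ _ => zero_le_one) x
  have hv0 : ∀ b, 0 ≤ v b := fun b => Finset.prod_nonneg fun j _ => ENNReal.toReal_nonneg
  -- basic facts about singletons
  have hπ : ∀ ω : ι → Bool, π {ω} = ∏ i, μ i {ω i} := by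
    intro ω
    have h1 : ({ω} : Set (ι → Bool)) = Set.pi Set.univ (fun i => {ω i}) := by
      ext ω'
      simp [Set.mem_univ_pi, funext_iff]
    rw [h1, Measure.pi_pi]
  have hwval : ∀ ω : ι → Bool, (π {ω}).toReal = w ω := by
    intro ω; rw [hπ ω, ENNReal.toReal_prod]
  -- the symm of e
  have hesymm : ∀ (a b) (i : ι), e.symm (a, b) i =
      if h : p i then a ⟨i, h⟩ else b ⟨i, h⟩ := by
    intro a b i
    simp [he, Equiv.piEquivPiSubtypeProd]
  have hq : ∀ a b, q (e.symm (a, b)) = a := by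
    intro a b
    funext i
    have : p (i : ι) := i.2
    simp [hqdef, hesymm, this]
  have hwsplit : ∀ a b, w (e.symm (a, b)) = u a * v b := by
    intro a b
    simp only [hwdef]
    rw [← Fintype.prod_subtype_mul_prod_subtype p (fun i => (μ i {e.symm (a, b) i}).toReal)]
    congr 1
    · simp only [hudef]
      refine Finset.prod_congr rfl fun i _ => ?_
      rw [hesymm, dif_pos i.2]
    · simp only [hvdef]
      refine Finset.prod_congr rfl fun i _ => ?_
      rw [hesymm, dif_neg i.2]
  -- sum of v is 1
  have hbool : ∀ ν : Measure Bool, IsProbabilityMeasure ν → ∑ x : Bool, (ν {x}).toReal = 1 := by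
    intro ν hν
    have h1 : ν {true} + ν {false} = 1 := by
      rw [← measure_union (by simp) (MeasurableSet.of_discrete)]
      have : ({true} ∪ {false} : Set Bool) = Set.univ := by
        ext x; cases x <;> simp
      rw [this, measure_univ]
    have h2 : (ν {true}).toReal + (ν {false}).toReal = 1 := by
      rw [← ENNReal.toReal_add (measure_ne_top ν _) (measure_ne_top ν _), h1]
      simp
    simpa [Fintype.sum_bool] using h2
  have hvsum : ∑ b, v b = 1 := by
    have h1 : (∏ j : {x // ¬ p x}, ∑ x : Bool, (μ (j : ι) {x}).toReal) = ∑ b, v b := by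
      rw [Finset.prod_univ_sum, Fintype.piFinset_univ]
    rw [← h1]
    exact Finset.prod_eq_one fun j _ => hbool _ inferInstance
  -- integral as a finite sum
  have hint : ∀ φ : (ι → Bool) → ℝ, ∫ ω, φ ω ∂π = ∑ ω, w ω * φ ω := by
    intro φ
    rw [integral_fintype (hintg φ)]
    exact Finset.sum_congr rfl fun ω _ => by rw [Measure.real, hwval, smul_eq_mul]
  have hsum : ∀ φ : (ι → Bool) → ℝ, ∑ ω, φ ω = ∑ a, ∑ b, φ (e.symm (a, b)) := by
    intro φ
    rw [← Equiv.sum_comp e.symm φ, Fintype.sum_prod_type]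
  -- the candidate conditional expectations
  set G : Set (ι → Bool) → (F → Bool) → ℝ :=
    fun E a => ∑ b, v b * ind E (e.symm (a, b)) with hGdef
  set g : Set (ι → Bool) → (ι → Bool) → ℝ := fun E ω => G E (q ω) with hgdef
  -- key set-integral identity
  have hkey : ∀ (E : Set (ι → Bool)) (s : Set (ι → Bool)), MeasurableSet[mF] s →
      ∫ ω in s, g E ω ∂π = ∫ ω in s, ind E ω ∂π := by
    intro E s hs
    have hsq : ∀ ω ω', q ω = q ω' → (ω ∈ s ↔ ω' ∈ s) := by
      rw [hmF] at hs
      obtain ⟨t, -, rfl⟩ := MeasurableSpace.measurableSet_comap.mp hs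
      intro ω ω' h
      simp only [Set.mem_preimage]
      rw [h]
    rw [← integral_indicator (hmsPi s),
      ← integral_indicator (hmsPi s), hint, hint,
      hsum (fun ω => w ω * s.indicator (g E) ω),
      hsum (fun ω => w ω * s.indicator (ind E) ω)]
    refine Finset.sum_congr rfl fun a _ => ?_
    have hmemiff : ∀ b b', e.symm (a, b) ∈ s ↔ e.symm (a, b') ∈ s := by
      intro b b'
      exact hsq _ _ (by rw [hq, hq])
    by_cases hms : e.symm (a, fun _ => false) ∈ s
    · have hall : ∀ b, e.symm (a, b) ∈ s := fun b => (hmemiff b _).mpr hms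
      have hGa : ∀ b, g E (e.symm (a, b)) = G E a := by
        intro b; rw [hgdef]; simp only; rw [hq]
      calc ∑ b, w (e.symm (a, b)) * s.indicator (g E) (e.symm (a, b))
          = ∑ b, (u a * v b) * G E a := by
            refine Finset.sum_congr rfl fun b _ => ?_
            rw [Set.indicator_of_mem (hall b), hwsplit, hGa]
        _ = (∑ b, v b) * (u a * G E a) := by
            rw [Finset.sum_mul]
            exact Finset.sum_congr rfl fun b _ => by ring
        _ = u a * G E a := by rw [hvsum, one_mul]
        _ = ∑ b, (u a * v b) * ind E (e.symm (a, b)) := by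
            rw [hGdef]; simp only; rw [Finset.mul_sum]
            exact Finset.sum_congr rfl fun b _ => by ring
        _ = ∑ b, w (e.symm (a, b)) * s.indicator (ind E) (e.symm (a, b)) := by
            refine Finset.sum_congr rfl fun b _ => ?_
            rw [Set.indicator_of_mem (hall b), hwsplit]
    · have hnone : ∀ b, e.symm (a, b) ∉ s := fun b => fun h => hms ((hmemiff b _).mp h)
      refine Finset.sum_congr rfl fun b _ => ?_
      rw [Set.indicator_of_notMem (hnone b), Set.indicator_of_notMem (hnone b)]
  -- identification of the conditional expectation
  have hcond : ∀ E : Set (ι → Bool), g E =ᵐ[π] π[ind E | mF] := by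
    intro E
    refine ae_eq_condExp_of_forall_setIntegral_eq hm (hintg _)
      (fun s _ _ => (hintg _).integrableOn)
      (fun s hs _ => hkey E s hs) ?_
    refine StronglyMeasurable.aestronglyMeasurable ?_
    have hqm : Measurable[mF] q := by
      rw [hmF]; exact Measurable.of_comap_le le_rfl
    exact ((Measurable.of_discrete (f := G E)).comp hqm).stronglyMeasurable
  -- pointwise FKG inequality
  have hmono : ∀ (a : ∀ _ : {x // p x}, Bool) (b b' : ∀ _ : {x // ¬ p x}, Bool),
      b ≤ b' → e.symm (a, b) ≤ e.symm (a, b') := by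
    intro a b b' hbb i
    rw [hesymm, hesymm]
    by_cases h : p i
    · rw [dif_pos h, dif_pos h]
    · rw [dif_neg h, dif_neg h]; exact hbb _
  have hanti : ∀ (E : Set (ι → Bool)), (∀ ω ω' : ι → Bool, ω ≤ ω' → ω' ∈ E → ω ∈ E) →
      ∀ a, Antitone (fun b => ind E (e.symm (a, b))) := by
    intro E hE a b b' hbb
    simp only
    by_cases h : e.symm (a, b') ∈ E
    · have h2 : e.symm (a, b) ∈ E := hE _ _ (hmono a b b' hbb) h
      rw [hinddef]; simp only
      rw [Set.indicator_of_mem h, Set.indicator_of_mem h2]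
    · rw [hinddef]; simp only
      rw [Set.indicator_of_notMem h]
      exact hind0 E _
  have hBoolprod : ∀ b b' : (∀ _ : {x // ¬ p x}, Bool), v b * v b' = v (b ⊓ b') * v (b ⊔ b') := by
    intro b b'
    rw [hvdef]
    simp only
    rw [← Finset.prod_mul_distrib, ← Finset.prod_mul_distrib]
    refine Finset.prod_congr rfl fun j _ => ?_
    have hPi1 : (b ⊓ b') j = b j ⊓ b' j := rfl
    have hPi2 : (b ⊔ b') j = b j ⊔ b' j := rfl
    rw [hPi1, hPi2]
    rcases le_total (b j) (b' j) with h | h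
    · rw [inf_eq_left.mpr h, sup_eq_right.mpr h]
    · rw [inf_eq_right.mpr h, sup_eq_left.mpr h, mul_comm]
  have hindmul : ∀ x, ind B x * ind C x = ind (B ∩ C) x := by
    intro x
    by_cases h1 : x ∈ B <;> by_cases h2 : x ∈ C <;>
      simp [hinddef, Set.indicator_apply, h1, h2]
  have hgfkg : ∀ ω, g B ω * g C ω ≤ g (B ∩ C) ω := by
    intro ω
    have h := fkg_antitone (w := v)
      (f := fun b => ind B (e.symm (q ω, b))) (g := fun b => ind C (e.symm (q ω, b)))
      hv0 (fun b => hind0 _ _) (fun b => hind0 _ _)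
      (hanti B hBdec (q ω)) (hanti C hCdec (q ω)) hBoolprod
    rw [hvsum, one_mul] at h
    calc g B ω * g C ω
        = (∑ b, v b * ind B (e.symm (q ω, b))) * ∑ b, v b * ind C (e.symm (q ω, b)) := rfl
      _ ≤ ∑ b, v b * (ind B (e.symm (q ω, b)) * ind C (e.symm (q ω, b))) := h
      _ = g (B ∩ C) ω := by
          refine Finset.sum_congr rfl fun b _ => ?_
          rw [hindmul]
  -- put everything together
  have h1 : ∫ ω, ind D ω * (π[ind B | mF]) ω * (π[ind C | mF]) ω ∂π
      = ∫ ω, ind D ω * g B ω * g C ω ∂π := by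
    refine integral_congr_ae ?_
    filter_upwards [hcond B, hcond C] with ω hb hc
    rw [← hb, ← hc]
  have h2 : ∫ ω, ind D ω * g B ω * g C ω ∂π ≤ ∫ ω, ind D ω * g (B ∩ C) ω ∂π := by
    refine integral_mono (hintg _) (hintg _) fun ω => ?_
    calc ind D ω * g B ω * g C ω = ind D ω * (g B ω * g C ω) := by ring
      _ ≤ ind D ω * g (B ∩ C) ω := by
          exact mul_le_mul_of_nonneg_left (hgfkg ω) (hind0 D ω)
  have h3 : ∫ ω, ind D ω * g (B ∩ C) ω ∂π = ∫ ω in D, g (B ∩ C) ω ∂π := by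
    rw [← integral_indicator (hmsPi D)]
    refine integral_congr_ae (Filter.Eventually.of_forall fun ω => ?_)
    by_cases h : ω ∈ D
    · rw [Set.indicator_of_mem h, hinddef]
      simp only
      rw [Set.indicator_of_mem h, one_mul]
    · rw [Set.indicator_of_notMem h, hinddef]
      simp only
      rw [Set.indicator_of_notMem h, zero_mul]
  have h4 : ∫ ω in D, g (B ∩ C) ω ∂π = ∫ ω in D, ind (B ∩ C) ω ∂π := hkey (B ∩ C) D hD
  have h5 : ∫ ω in D, ind (B ∩ C) ω ∂π = (π (D ∩ B ∩ C)).toReal := by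
    rw [← integral_indicator (hmsPi D)]
    have heq : D.indicator (ind (B ∩ C)) = Set.indicator (D ∩ B ∩ C) (fun _ => (1 : ℝ)) := by
      funext ω
      by_cases h1 : ω ∈ D <;> by_cases h2 : ω ∈ B <;> by_cases h3 : ω ∈ C <;>
        simp [hinddef, Set.indicator_apply, h1, h2, h3]
    rw [heq, integral_indicator_const (1 : ℝ) (hmsPi _)]
    simp
    rfl
  calc ∫ ω, ind D ω * (π[ind B | mF]) ω * (π[ind C | mF]) ω ∂π
      = ∫ ω, ind D ω * g B ω * g C ω ∂π := h1
    _ ≤ ∫ ω, ind D ω * g (B ∩ C) ω ∂π := h2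
    _ = (π (D ∩ B ∩ C)).toReal := by rw [h3, h4, h5]
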